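/- Under the same periodic dual-pairing SBP assumptions (⟨D₊f,g⟩_H + ⟨f,D₋g⟩_H = 0 for all f,g), the semi-discrete Burgers scheme ∂ₜu = −(1/3)u∘(Du) − (1/3)D(u²) + (γ/2)(D₊−D₋)u conserves the total discrete mass: d/dt ⟨𝟙, u⟩_H = 0, where 𝟙 = (1,…,1)ᵀ. -/

import Mathlib

/-- Discrete mass conservation for the semi-discrete Burgers scheme:
`d/dt ⟨𝟙, u⟩_H = 0` along solutions, given the periodic dual-pairing SBP
property and exactness on constants `D±𝟙 = 0`. -/
theorem semidiscrete_burgers_mass_conservation (N : ℕ)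
    (Dp Dm : Matrix (Fin N) (Fin N) ℝ) (w : Fin N → ℝ) (hw : ∀ i, 0 < w i)
    (γ : ℝ) (hγ : 0 ≤ γ)
    (hsbp : ∀ f g : Fin N → ℝ,
      (∑ i, w i * (Dp.mulVec f) i * g i) + (∑ i, w i * f i * (Dm.mulVec g) i) = 0)
    (hDp1 : Dp.mulVec (fun _ => (1 : ℝ)) = 0)
    (hDm1 : Dm.mulVec (fun _ => (1 : ℝ)) = 0)
    (u : ℝ → Fin N → ℝ)
    (hode : ∀ t, HasDerivAt u
      (fun i => -(1 / 3) * u t i * ((((1 : ℝ) / 2) • (Dp + Dm)).mulVec (u t)) i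
        - (1 / 3) * ((((1 : ℝ) / 2) • (Dp + Dm)).mulVec (fun j => u t j * u t j)) i
        + (γ / 2) * ((Dp - Dm).mulVec (u t)) i) t) :
    ∀ t, HasDerivAt (fun s => ∑ i, w i * (1 : ℝ) * u s i) 0 t := by
  -- ∑ w i * (Dm g) i = 0 for all g
  have h1 : ∀ g : Fin N → ℝ, ∑ i, w i * (Dm.mulVec g) i = 0 := by
    intro g
    have := hsbp (fun _ => 1) g
    simpa [hDp1] using this
  -- ∑ w i * (Dp f) i = 0 for all f
  have h2 : ∀ f : Fin N → ℝ, ∑ i, w i * (Dp.mulVec f) i = 0 := by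
    intro f
    have := hsbp f (fun _ => 1)
    simpa [hDm1] using this
  intro t
  set rhs : Fin N → ℝ := fun i =>
      -(1 / 3) * u t i * ((((1 : ℝ) / 2) • (Dp + Dm)).mulVec (u t)) i
        - (1 / 3) * ((((1 : ℝ) / 2) • (Dp + Dm)).mulVec (fun j => u t j * u t j)) i
        + (γ / 2) * ((Dp - Dm).mulVec (u t)) i with hrhs
  -- ∑ w u (Dp u + Dm u) = 0
  have h3 : ∑ i, w i * u t i * ((Dp.mulVec (u t)) i + (Dm.mulVec (u t)) i) = 0 := by
    have := hsbp (u t) (u t)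
    rw [← this, ← Finset.sum_add_distrib]
    exact Finset.sum_congr rfl fun i _ => by ring
  have key : ∑ i, w i * (1 : ℝ) * rhs i = 0 := by
    have expand : ∑ i, w i * (1 : ℝ) * rhs i =
        (-(1/6)) * (∑ i, w i * u t i * ((Dp.mulVec (u t)) i + (Dm.mulVec (u t)) i))
        + (-(1/6)) * (∑ i, w i * (Dp.mulVec (fun j => u t j * u t j)) i)
        + (-(1/6)) * (∑ i, w i * (Dm.mulVec (fun j => u t j * u t j)) i)
        + (γ/2) * (∑ i, w i * (Dp.mulVec (u t)) i)
        + (-(γ/2)) * (∑ i, w i * (Dm.mulVec (u t)) i) := by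
      simp only [Finset.mul_sum, ← Finset.sum_add_distrib]
      refine Finset.sum_congr rfl fun i _ => ?_
      simp only [hrhs, Matrix.smul_mulVec, Matrix.add_mulVec, Matrix.sub_mulVec,
        Pi.add_apply, Pi.sub_apply, Pi.smul_apply, smul_eq_mul]
      ring
    rw [expand, h3, h1, h2, h1, h2]
    ring
  have hcoord : ∀ i : Fin N, HasDerivAt (fun s => u s i) (rhs i) t :=
    hasDerivAt_pi.mp (hode t)
  have hsum : HasDerivAt (fun s => ∑ i, w i * (1 : ℝ) * u s i)
      (∑ i, w i * (1 : ℝ) * rhs i) t :=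
    HasDerivAt.fun_sum fun i _ => (hcoord i).const_mul (w i * 1)
  rwa [key] at hsum
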